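/- arXiv:2409.07699 — 14 statements merged into one kernel-verified Lean document; each statement's English description precedes it below -/
import Mathlib

section
/- For all real numbers a, b, c, d, the ℝ-linear map P on H_ss determined on the basis by P(1) = a e₂ + c e₃, P(e₁) = b e₂ + d e₃, P(e₂) = 0, P(e₃) = 0 is a Rota-Baxter operator of weight 0 on H_ss. -/
noncomputable section

/-- The split semi-quaternion algebra `H_ss`, realized as the quaternion algebra over `ℝ`
with `e₁² = 1`, `e₂² = 0` (so that `e₃ = e₁e₂` satisfies `e₃² = 0`,
`e₁e₂ = e₃ = -e₂e₁`, `e₂e₃ = 0 = e₃e₂`, `e₃e₁ = -e₂ = -e₁e₃`). -/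
abbrev Hss : Type := QuaternionAlgebra ℝ 1 0 0

/-- The basis element `e₁`. -/
def e1 : Hss := ⟨0, 1, 0, 0⟩

/-- The basis element `e₂`. -/
def e2 : Hss := ⟨0, 0, 1, 0⟩

/-- The basis element `e₃`. -/
def e3 : Hss := ⟨0, 0, 0, 1⟩

/-- `P` is a Rota-Baxter operator of weight `l` on `H_ss`. -/
def IsRotaBaxter (l : ℝ) (P : Hss →ₗ[ℝ] Hss) : Prop :=
  ∀ x y : Hss, P x * P y = P (P x * y) + P (x * P y) + l • P (x * y)

theorem rb_w0_family1 (a b c d : ℝ)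
    (P : Hss →ₗ[ℝ] Hss)
    (h0 : P 1 = (a) • e2 + (c) • e3)
    (h1 : P e1 = (b) • e2 + (d) • e3)
    (h2 : P e2 = 0)
    (h3 : P e3 = 0) :
    IsRotaBaxter 0 P := by
  have hdec : ∀ x : Hss, x = x.re • (1:Hss) + x.imI • e1 + x.imJ • e2 + x.imK • e3 := by
    intro x
    ext <;> simp [e1, e2, e3]
  have hP : ∀ x : Hss, P x = (a * x.re + b * x.imI) • e2 + (c * x.re + d * x.imI) • e3 := by
    intro x
    conv_lhs => rw [hdec x]
    simp only [map_add, map_smul, h0, h1, h2, h3, smul_zero, add_zero, smul_add, smul_smul]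
    ext <;> simp [e2, e3] <;> ring
  intro x y
  rw [hP x, hP y, hP (_ * y), hP (x * _), zero_smul, add_zero]
  ext <;>
    simp [e2, e3, QuaternionAlgebra.re_mul, QuaternionAlgebra.imI_mul,
      QuaternionAlgebra.imJ_mul, QuaternionAlgebra.imK_mul] <;> ring
end
end

section
/- For all real numbers a, b, c, the ℝ-linear map P on H_ss determined on the basis by P(1) = a(e₂ + e₃), P(e₁) = b(e₂ + e₃), P(e₂) = c(e₂ + e₃), P(e₃) = −c(e₂ + e₃) is a Rota-Baxter operator of weight 0 on H_ss. -/
noncomputable section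

theorem rb_w0_family2 (a b c : ℝ)
    (P : Hss →ₗ[ℝ] Hss)
    (h0 : P 1 = (a) • (e2 + e3))
    (h1 : P e1 = (b) • (e2 + e3))
    (h2 : P e2 = (c) • (e2 + e3))
    (h3 : P e3 = (-c) • (e2 + e3)) :
    IsRotaBaxter 0 P := by
  have Pval : ∀ x : Hss,
      P x = ⟨0, 0, a * x.re + b * x.imI + c * x.imJ - c * x.imK,
              a * x.re + b * x.imI + c * x.imJ - c * x.imK⟩ := by
    intro x
    have hx : x = x.re • (1 : Hss) + x.imI • e1 + x.imJ • e2 + x.imK • e3 := by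
      ext <;> simp [e1, e2, e3]
    rw [hx]
    simp only [map_add, map_smul, h0, h1, h2, h3]
    ext <;> simp [e1, e2, e3] <;> ring
  intro x y
  rw [Pval x, Pval y, Pval, Pval, Pval]
  ext <;>
    simp [QuaternionAlgebra.re_mul, QuaternionAlgebra.imI_mul, QuaternionAlgebra.imJ_mul,
      QuaternionAlgebra.imK_mul] <;> ring
end
end

section
/- For all real numbers a, b, c, the ℝ-linear map P on H_ss determined on the basis by P(1) = a(e₂ − e₃), P(e₁) = b(e₂ − e₃), P(e₂) = c(e₂ − e₃), P(e₃) = c(e₂ − e₃) is a Rota-Baxter operator of weight 0 on H_ss. -/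
noncomputable section

lemma decomp (x : Hss) :
    x = x.re • (1 : Hss) + x.imI • e1 + x.imJ • e2 + x.imK • e3 := by
  ext <;> simp [e1, e2, e3]

theorem rb_w0_family3 (a b c : ℝ)
    (P : Hss →ₗ[ℝ] Hss)
    (h0 : P 1 = (a) • (e2 - e3))
    (h1 : P e1 = (b) • (e2 - e3))
    (h2 : P e2 = (c) • (e2 - e3))
    (h3 : P e3 = (c) • (e2 - e3)) :
    IsRotaBaxter 0 P := by
  have key : ∀ x : Hss,
      P x = (a * x.re + b * x.imI + c * x.imJ + c * x.imK) • (e2 - e3) := by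
    intro x
    conv_lhs => rw [decomp x]
    simp only [map_add, map_smul, h0, h1, h2, h3, smul_smul]
    module
  intro x y
  rw [key x, key y, key (_ * y), key (x * _), key (x * y)]
  ext <;> simp [e2, e3, QuaternionAlgebra.re_mul, QuaternionAlgebra.imI_mul,
    QuaternionAlgebra.imJ_mul, QuaternionAlgebra.imK_mul] <;> ring
end
end

section
/- For all real numbers a, b, the ℝ-linear map P on H_ss determined on the basis by P(1) = 0, P(e₁) = 0, P(e₂) = a − a e₁ + b e₂ + b e₃, P(e₃) = −a + a e₁ − b e₂ − b e₃ is a Rota-Baxter operator of weight 0 on H_ss. -/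
noncomputable section

theorem rb_w0_family4 (a b : ℝ)
    (P : Hss →ₗ[ℝ] Hss)
    (h0 : P 1 = 0)
    (h1 : P e1 = 0)
    (h2 : P e2 = (a) • (1 : Hss) - (a) • e1 + (b) • e2 + (b) • e3)
    (h3 : P e3 = (-a) • (1 : Hss) + (a) • e1 - (b) • e2 - (b) • e3) :
    IsRotaBaxter 0 P := by
  have decomp : ∀ x : Hss, x = x.re • (1 : Hss) + x.imI • e1 + x.imJ • e2 + x.imK • e3 := by
    intro x
    ext <;> simp [e1, e2, e3]
  have hP : ∀ x : Hss, P x = (x.imJ - x.imK) • (⟨a, -a, b, b⟩ : Hss) := by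
    intro x
    rw [decomp x]
    simp only [map_add, map_smul, h0, h1, h2, h3]
    ext <;> simp [e1, e2, e3] <;> ring
  intro x y
  rw [hP x, hP y, hP, hP, hP]
  simp only [zero_smul, add_zero, smul_mul_assoc, mul_smul_comm, map_smul, hP]
  ext <;>
    simp [QuaternionAlgebra.re_mul, QuaternionAlgebra.imI_mul, QuaternionAlgebra.imJ_mul,
      QuaternionAlgebra.imK_mul] <;> ring
end
end

section
/- For all real numbers a, b, c with a ≠ 0 and b ≠ 0, the ℝ-linear map P on H_ss determined on the basis by P(1) = 0, P(e₁) = a − a e₁ + c e₂ + (c − a²/b) e₃, P(e₂) = b − b e₁ + (bc/a) e₂ + (bc/a − a) e₃, P(e₃) = −b + b e₁ − (bc/a) e₂ + (a − bc/a) e₃ is a Rota-Baxter operator of weight 0 on H_ss. -/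
set_option maxHeartbeats 1000000

noncomputable section

lemma mulmk (p q r s p' q' r' s' : ℝ) :
    (⟨p,q,r,s⟩ : Hss) * ⟨p',q',r',s'⟩ =
      ⟨p*p'+q*q', p*q'+q*p', p*r'+q*s'+r*p'-s*q', p*s'+q*r'-r*q'+s*p'⟩ := by
  ext <;> simp [QuaternionAlgebra.re_mul, QuaternionAlgebra.imI_mul,
    QuaternionAlgebra.imJ_mul, QuaternionAlgebra.imK_mul] <;> ring

lemma decomp_s6 (p q r s : ℝ) :
    (⟨p,q,r,s⟩ : Hss) = p • (1:Hss) + q • e1 + r • e2 + s • e3 := by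
  ext <;> simp [e1, e2, e3]

theorem rb_w0_family8 (a b c : ℝ) (ha : a ≠ 0) (hb : b ≠ 0)
    (P : Hss →ₗ[ℝ] Hss)
    (h0 : P 1 = 0)
    (h1 : P e1 = (a) • (1 : Hss) - (a) • e1 + (c) • e2 + (c - a^2/b) • e3)
    (h2 : P e2 = (b) • (1 : Hss) - (b) • e1 + (b*c/a) • e2 + (b*c/a - a) • e3)
    (h3 : P e3 = (-b) • (1 : Hss) + (b) • e1 - (b*c/a) • e2 + (a - b*c/a) • e3) :
    IsRotaBaxter 0 P := by
  have hP : ∀ p q r s : ℝ, P ⟨p,q,r,s⟩ =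
      ⟨q*a + r*b - s*b, -(q*a) - r*b + s*b, q*c + r*(b*c/a) - s*(b*c/a),
        q*(c - a^2/b) + r*(b*c/a - a) + s*(a - b*c/a)⟩ := by
    intro p q r s
    rw [decomp_s6, map_add, map_add, map_add, map_smul, map_smul, map_smul, map_smul,
      h0, h1, h2, h3]
    ext <;> simp [e1, e2, e3] <;> ring
  intro x y
  obtain ⟨p, q, r, s⟩ := x
  obtain ⟨p', q', r', s'⟩ := y
  rw [mulmk, hP, hP, hP, mulmk, mulmk, hP, hP, mulmk]
  ext <;>
    simp only [QuaternionAlgebra.re_add, QuaternionAlgebra.imI_add, QuaternionAlgebra.imJ_add,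
      QuaternionAlgebra.imK_add, QuaternionAlgebra.re_smul, QuaternionAlgebra.imI_smul,
      QuaternionAlgebra.imJ_smul, QuaternionAlgebra.imK_smul, smul_eq_mul, zero_mul,
      add_zero] <;>
    field_simp <;> ring
end
end

section
/- For all real numbers a, b, c with a ≠ 0 and b ≠ 0, the ℝ-linear map P on H_ss determined on the basis by P(1) = 0, P(e₁) = a + a e₁ + c e₂ + (a²/b + c) e₃, P(e₂) = b + b e₁ + (bc/a) e₂ + (bc/a + a) e₃, P(e₃) = −b − b e₁ − (bc/a) e₂ − ((a² + bc)/a) e₃ is a Rota-Baxter operator of weight 0 on H_ss. -/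
noncomputable section

lemma hss_decomp (x : Hss) :
    x = x.re • (1:Hss) + x.imI • e1 + x.imJ • e2 + x.imK • e3 := by
  ext <;> simp [e1, e2, e3]

set_option maxHeartbeats 2000000 in
theorem rb_w0_family9 (a b c : ℝ) (ha : a ≠ 0) (hb : b ≠ 0)
    (P : Hss →ₗ[ℝ] Hss)
    (h0 : P 1 = 0)
    (h1 : P e1 = (a) • (1 : Hss) + (a) • e1 + (c) • e2 + (a^2/b + c) • e3)
    (h2 : P e2 = (b) • (1 : Hss) + (b) • e1 + (b*c/a) • e2 + (b*c/a + a) • e3)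
    (h3 : P e3 = (-b) • (1 : Hss) - (b) • e1 - (b*c/a) • e2 - ((a^2 + b*c)/a) • e3) :
    IsRotaBaxter 0 P := by
  have Pval : ∀ x : Hss, P x =
      ⟨a * x.imI + b * x.imJ - b * x.imK,
       a * x.imI + b * x.imJ - b * x.imK,
       c * x.imI + b*c/a * x.imJ - b*c/a * x.imK,
       (a^2/b + c) * x.imI + (b*c/a + a) * x.imJ - (a^2 + b*c)/a * x.imK⟩ := by
    intro x
    conv_lhs => rw [hss_decomp x]
    simp only [map_add, map_smul, h0, h1, h2, h3, smul_zero]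
    ext <;> simp [e1, e2, e3] <;> ring
  intro x y
  obtain ⟨x1, x2, x3, x4⟩ := x
  obtain ⟨y1, y2, y3, y4⟩ := y
  simp only [Pval, zero_smul, add_zero]
  simp only [QuaternionAlgebra.re_mul, QuaternionAlgebra.imI_mul,
    QuaternionAlgebra.imJ_mul, QuaternionAlgebra.imK_mul]
  ext <;>
    simp only [QuaternionAlgebra.re_mul, QuaternionAlgebra.imI_mul,
      QuaternionAlgebra.imJ_mul, QuaternionAlgebra.imK_mul,
      QuaternionAlgebra.re_add, QuaternionAlgebra.imI_add,
      QuaternionAlgebra.imJ_add, QuaternionAlgebra.imK_add] <;>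
    field_simp <;> ring
end
end

section
/- For all real numbers a, b, c with a ≠ 0 and b ≠ 0, the ℝ-linear map P on H_ss determined on the basis by P(1) = 0, P(e₁) = a + a e₁ + c e₂ − ((a² + bc)/b) e₃, P(e₂) = b + b e₁ + (bc/a) e₂ − ((a² + bc)/a) e₃, P(e₃) = b + b e₁ + (bc/a) e₂ − ((a² + bc)/a) e₃ is a Rota-Baxter operator of weight 0 on H_ss. -/
set_option maxHeartbeats 4000000

noncomputable section

theorem rb_w0_family11 (a b c : ℝ) (ha : a ≠ 0) (hb : b ≠ 0)
    (P : Hss →ₗ[ℝ] Hss)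
    (h0 : P 1 = 0)
    (h1 : P e1 = (a) • (1 : Hss) + (a) • e1 + (c) • e2 - ((a^2 + b*c)/b) • e3)
    (h2 : P e2 = (b) • (1 : Hss) + (b) • e1 + (b*c/a) • e2 - ((a^2 + b*c)/a) • e3)
    (h3 : P e3 = (b) • (1 : Hss) + (b) • e1 + (b*c/a) • e2 - ((a^2 + b*c)/a) • e3) :
    IsRotaBaxter 0 P := by
  have hdecomp : ∀ x : Hss, x = x.re • (1 : Hss) + x.imI • e1 + x.imJ • e2 + x.imK • e3 := by
    intro x
    ext <;> simp [e1, e2, e3]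
  have hP : ∀ x : Hss, P x = x.imI • P e1 + x.imJ • P e2 + x.imK • P e3 := by
    intro x
    conv_lhs => rw [hdecomp x]
    simp [h0]
  intro x y
  rw [hP (P x * y), hP (x * P y), hP x, hP y, h1, h2, h3]
  simp only [zero_smul, add_zero]
  ext <;>
    simp only [e1, e2, e3, QuaternionAlgebra.re_add, QuaternionAlgebra.imI_add,
      QuaternionAlgebra.imJ_add, QuaternionAlgebra.imK_add, QuaternionAlgebra.re_sub,
      QuaternionAlgebra.imI_sub, QuaternionAlgebra.imJ_sub, QuaternionAlgebra.imK_sub,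
      QuaternionAlgebra.re_smul, QuaternionAlgebra.imI_smul, QuaternionAlgebra.imJ_smul,
      QuaternionAlgebra.imK_smul, QuaternionAlgebra.re_mul, QuaternionAlgebra.imI_mul,
      QuaternionAlgebra.imJ_mul, QuaternionAlgebra.imK_mul, QuaternionAlgebra.re_one,
      QuaternionAlgebra.imI_one, QuaternionAlgebra.imJ_one, QuaternionAlgebra.imK_one,
      smul_eq_mul] <;>
    field_simp <;>
    ring
end
end

section
/- Let λ be a nonzero real number. For all real numbers a, b, the ℝ-linear map P on H_ss determined on the basis by P(1) = 0, P(e₁) = −λ − λ e₁ + a e₂ + b e₃, P(e₂) = 0, P(e₃) = 0 is a Rota-Baxter operator of weight λ on H_ss. -/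
noncomputable section

lemma decomp_s10 (z : Hss) : z = z.re • 1 + z.imI • e1 + z.imJ • e2 + z.imK • e3 := by
  ext <;> simp [e1, e2, e3]

theorem rb_nonzero_weight_family1 (l : ℝ) (hl : l ≠ 0) (a b : ℝ)
    (P : Hss →ₗ[ℝ] Hss)
    (h0 : P 1 = 0)
    (h1 : P e1 = (-l) • (1 : Hss) - (l) • e1 + (a) • e2 + (b) • e3)
    (h2 : P e2 = 0)
    (h3 : P e3 = 0) :
    IsRotaBaxter l P := by
  have key : ∀ z : Hss, P z = z.imI • ((-l) • (1 : Hss) - l • e1 + a • e2 + b • e3) := by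
    intro z
    conv_lhs => rw [decomp_s10 z]
    simp [h0, h1, h2, h3]
  intro x y
  simp only [key]
  ext <;> simp [e1, e2, e3, QuaternionAlgebra.re_mul, QuaternionAlgebra.imI_mul,
    QuaternionAlgebra.imJ_mul, QuaternionAlgebra.imK_mul] <;> ring
end
end

section
/- Let λ be a nonzero real number. For all real numbers a, b, c with a ≠ 0, the ℝ-linear map P on H_ss determined on the basis by P(1) = 0, P(e₁) = −b + b e₁ + ((b−c)(b+λ)/a) e₂ − (c(b+λ)/a) e₃, P(e₂) = a − a e₁ + (c − b − λ) e₂ + c e₃, P(e₃) = −a + a e₁ + (b − c) e₂ + (−c − λ) e₃ is a Rota-Baxter operator of weight λ on H_ss. -/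
set_option maxHeartbeats 2000000


noncomputable section

theorem rb_nonzero_weight_family3 (l : ℝ) (hl : l ≠ 0) (a b c : ℝ) (ha : a ≠ 0)
    (P : Hss →ₗ[ℝ] Hss)
    (h0 : P 1 = 0)
    (h1 : P e1 = (-b) • (1 : Hss) + (b) • e1 + ((b - c)*(b + l)/a) • e2 - (c*(b + l)/a) • e3)
    (h2 : P e2 = (a) • (1 : Hss) - (a) • e1 + (c - b - l) • e2 + (c) • e3)
    (h3 : P e3 = (-a) • (1 : Hss) + (a) • e1 + (b - c) • e2 + (-c - l) • e3) :
    IsRotaBaxter l P := by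
  have key : ∀ z : Hss, P z = QuaternionAlgebra.mk
      (z.imI * (-b) + z.imJ * a + z.imK * (-a))
      (z.imI * b + z.imJ * (-a) + z.imK * a)
      (z.imI * ((b-c)*(b+l)/a) + z.imJ * (c-b-l) + z.imK * (b-c))
      (z.imI * (-(c*(b+l)/a)) + z.imJ * c + z.imK * (-c-l)) := by
    intro z
    have hz : z = z.re • (1:Hss) + z.imI • e1 + z.imJ • e2 + z.imK • e3 := by
      ext <;> simp [e1, e2, e3]
    rw [hz]
    simp only [map_add, map_smul, h0, h1, h2, h3]
    ext <;> simp [e1, e2, e3] <;> ring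
  intro x y
  rw [key (P x * y), key (x * P y), key x, key y, key (x*y)]
  obtain ⟨x1,x2,x3,x4⟩ := x
  obtain ⟨y1,y2,y3,y4⟩ := y
  ext <;>
    simp only [QuaternionAlgebra.re_mul, QuaternionAlgebra.imI_mul,
      QuaternionAlgebra.imJ_mul, QuaternionAlgebra.imK_mul,
      QuaternionAlgebra.re_add, QuaternionAlgebra.imI_add,
      QuaternionAlgebra.imJ_add, QuaternionAlgebra.imK_add,
      QuaternionAlgebra.re_smul, QuaternionAlgebra.imI_smul,
      QuaternionAlgebra.imJ_smul, QuaternionAlgebra.imK_smul, smul_eq_mul] <;>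
    field_simp <;> ring
end
end

section
/- Let λ be a nonzero real number. For all real numbers a, b, c with a ≠ 0, the ℝ-linear map P on H_ss determined on the basis by P(1) = 0, P(e₁) = −b + b e₁ + (b(b−c+λ)/a) e₂ − (bc/a) e₃, P(e₂) = a − a e₁ + (c − b − λ) e₂ + c e₃, P(e₃) = −a + a e₁ + (b − c + λ) e₂ − c e₃ is a Rota-Baxter operator of weight λ on H_ss. -/
noncomputable section

set_option maxHeartbeats 2000000 in
theorem rb_nonzero_weight_family4 (l : ℝ) (hl : l ≠ 0) (a b c : ℝ) (ha : a ≠ 0)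
    (P : Hss →ₗ[ℝ] Hss)
    (h0 : P 1 = 0)
    (h1 : P e1 = (-b) • (1 : Hss) + (b) • e1 + (b*(b - c + l)/a) • e2 - (b*c/a) • e3)
    (h2 : P e2 = (a) • (1 : Hss) - (a) • e1 + (c - b - l) • e2 + (c) • e3)
    (h3 : P e3 = (-a) • (1 : Hss) + (a) • e1 + (b - c + l) • e2 - (c) • e3) :
    IsRotaBaxter l P := by
  set d : ℝ := b / a with hd
  have hb : b = a * d := by rw [hd]; field_simp
  have h1' : P e1 = (⟨-(a*d), a*d, d*(a*d - c + l), -(d*c)⟩ : Hss) := by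
    rw [h1]; ext <;> simp [e1, e2, e3, hb] <;> field_simp <;> ring
  have h2' : P e2 = (⟨a, -a, c - a*d - l, c⟩ : Hss) := by
    rw [h2]; ext <;> simp [e1, e2, e3, hb]
  have h3' : P e3 = (⟨-a, a, a*d - c + l, -c⟩ : Hss) := by
    rw [h3]; ext <;> simp [e1, e2, e3, hb]
  have hP : ∀ z : Hss, P z =
      z.imI • (⟨-(a*d), a*d, d*(a*d - c + l), -(d*c)⟩ : Hss)
      + z.imJ • (⟨a, -a, c - a*d - l, c⟩ : Hss)
      + z.imK • (⟨-a, a, a*d - c + l, -c⟩ : Hss) := by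
    intro z
    have hz : z = z.re • (1 : Hss) + z.imI • e1 + z.imJ • e2 + z.imK • e3 := by
      ext <;> simp [e1, e2, e3]
    conv_lhs => rw [hz]
    simp only [map_add, map_smul, h0, h1', h2', h3', smul_zero, zero_add]
  intro x y
  simp only [hP]
  ext <;>
    simp only [QuaternionAlgebra.re_mul, QuaternionAlgebra.imI_mul,
      QuaternionAlgebra.imJ_mul, QuaternionAlgebra.imK_mul,
      QuaternionAlgebra.re_add, QuaternionAlgebra.imI_add, QuaternionAlgebra.imJ_add,
      QuaternionAlgebra.imK_add, QuaternionAlgebra.re_smul, QuaternionAlgebra.imI_smul,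
      QuaternionAlgebra.imJ_smul, QuaternionAlgebra.imK_smul, smul_eq_mul] <;>
    ring
end
end

section
/- Let λ be a nonzero real number. For all real numbers a, b, c with a ≠ 0, the ℝ-linear map P on H_ss determined on the basis by P(1) = −λ, P(e₁) = (−b − λ) + b e₁ + ((b−c)(b+λ)/a) e₂ − (c(b+λ)/a) e₃, P(e₂) = a − a e₁ + (c − b − λ) e₂ + c e₃, P(e₃) = −a + a e₁ + (b − c) e₂ + (−c − λ) e₃ is a Rota-Baxter operator of weight λ on H_ss. -/
noncomputable section

set_option maxHeartbeats 2000000 in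
theorem rb_nonzero_weight_family5 (l : ℝ) (hl : l ≠ 0) (a b c : ℝ) (ha : a ≠ 0)
    (P : Hss →ₗ[ℝ] Hss)
    (h0 : P 1 = (-l) • (1 : Hss))
    (h1 : P e1 = (-b - l) • (1 : Hss) + (b) • e1 + ((b - c)*(b + l)/a) • e2 - (c*(b + l)/a) • e3)
    (h2 : P e2 = (a) • (1 : Hss) - (a) • e1 + (c - b - l) • e2 + (c) • e3)
    (h3 : P e3 = (-a) • (1 : Hss) + (a) • e1 + (b - c) • e2 + (-c - l) • e3) :
    IsRotaBaxter l P := by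
  have key : ∀ u : Hss, P u = u.re • P 1 + u.imI • P e1 + u.imJ • P e2 + u.imK • P e3 := by
    intro u
    have : u = u.re • (1:Hss) + u.imI • e1 + u.imJ • e2 + u.imK • e3 := by
      ext <;> simp [e1, e2, e3]
    conv_lhs => rw [this]
    simp [map_add]
  have Pgen : ∀ u1 u2 u3 u4 : ℝ, P ⟨u1, u2, u3, u4⟩ =
      ⟨-l*u1 + (-b-l)*u2 + a*u3 - a*u4,
       b*u2 - a*u3 + a*u4,
       ((b-c)*(b+l)/a)*u2 + (c-b-l)*u3 + (b-c)*u4,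
       -(c*(b+l)/a)*u2 + c*u3 + (-c-l)*u4⟩ := by
    intro u1 u2 u3 u4
    rw [key, h0, h1, h2, h3]
    ext <;> simp [e1, e2, e3] <;> ring
  intro x y
  obtain ⟨x1, x2, x3, x4⟩ := x
  obtain ⟨y1, y2, y3, y4⟩ := y
  rw [Pgen x1 x2 x3 x4, Pgen y1 y2 y3 y4]
  simp only [QuaternionAlgebra.mk_mul_mk]
  rw [Pgen, Pgen, Pgen]
  simp only [QuaternionAlgebra.mk_mul_mk, QuaternionAlgebra.smul_mk, QuaternionAlgebra.mk_add_mk,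
    QuaternionAlgebra.mk.injEq, smul_eq_mul]
  refine ⟨?_, ?_, ?_, ?_⟩ <;> (field_simp; ring)
end
end

section
/- Let λ be a nonzero real number. For all real numbers a, b with b + λ ≠ 0, the ℝ-linear map P on H_ss determined on the basis by P(1) = 0, P(e₁) = −λ − λ e₁ + a e₂ + (ab/(b+λ)) e₃, P(e₂) = b e₂ + b e₃, P(e₃) = −(b+λ) e₂ − (b+λ) e₃ is a Rota-Baxter operator of weight λ on H_ss. -/
set_option maxHeartbeats 2000000
noncomputable section

theorem rb_nonzero_weight_family6 (l : ℝ) (hl : l ≠ 0) (a b : ℝ) (hb : b + l ≠ 0)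
    (P : Hss →ₗ[ℝ] Hss)
    (h0 : P 1 = 0)
    (h1 : P e1 = (-l) • (1 : Hss) - (l) • e1 + (a) • e2 + (a*b/(b + l)) • e3)
    (h2 : P e2 = (b) • e2 + (b) • e3)
    (h3 : P e3 = (-(b + l)) • e2 - (b + l) • e3) :
    IsRotaBaxter l P := by
  obtain ⟨c, hc⟩ : ∃ c : ℝ, a * b / (b + l) = c := ⟨_, rfl⟩
  have hc2 : c * (b + l) = a * b := by rw [← hc]; field_simp
  rw [hc] at h1
  have hdec : ∀ x : Hss, x = x.re • (1 : Hss) + x.imI • e1 + x.imJ • e2 + x.imK • e3 := by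
    intro x
    ext <;> simp [e1, e2, e3]
  have hP : ∀ x : Hss, P x =
      ⟨-l * x.imI, -l * x.imI, a * x.imI + b * x.imJ - (b + l) * x.imK,
        c * x.imI + b * x.imJ - (b + l) * x.imK⟩ := by
    intro x
    conv_lhs => rw [hdec x]
    simp only [map_add, map_smul, h0, h1, h2, h3]
    ext <;> simp [e1, e2, e3] <;> ring
  intro x y
  rw [hP x, hP y, hP, hP, hP]
  ext <;>
    simp [QuaternionAlgebra.re_mul, QuaternionAlgebra.imI_mul,
      QuaternionAlgebra.imJ_mul, QuaternionAlgebra.imK_mul] <;>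
    first
    | ring1
    | linear_combination (x.imI * y.re + y.imI * x.re) * hc2
end
end

section
/- Let λ be a nonzero real number. For all real numbers a, b with λ + b ≠ 0, the ℝ-linear map P on H_ss determined on the basis by P(1) = −λ, P(e₁) = λ + a e₂ + (ab/(λ+b)) e₃, P(e₂) = −(λ+b) e₂ − b e₃, P(e₃) = (λ+b) e₂ + b e₃ is a Rota-Baxter operator of weight λ on H_ss. (Under the identification e₁ = g, e₂ = ν, e₃ = gν, this is the operator (S7) of Ma et al. on the Sweedler algebra.) -/
noncomputable section

lemma mk_mul_mk' (w x y z w' x' y' z' : ℝ) :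
    (⟨w, x, y, z⟩ * ⟨w', x', y', z'⟩ : Hss) =
      ⟨w * w' + x * x', w * x' + x * w',
        w * y' + x * z' + y * w' - z * x',
        w * z' + x * y' - y * x' + z * w'⟩ := by
  ext <;>
    simp [QuaternionAlgebra.mk_mul_mk]

lemma rep (v : Hss) : v = v.re • (1:Hss) + v.imI • e1 + v.imJ • e2 + v.imK • e3 := by
  ext <;> simp [e1, e2, e3]

theorem rb_nonzero_weight_S7 (l : ℝ) (hl : l ≠ 0) (a b : ℝ) (hb : l + b ≠ 0)
    (P : Hss →ₗ[ℝ] Hss)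
    (h0 : P 1 = (-l) • (1 : Hss))
    (h1 : P e1 = (l) • (1 : Hss) + (a) • e2 + (a*b/(l + b)) • e3)
    (h2 : P e2 = (-(l + b)) • e2 - (b) • e3)
    (h3 : P e3 = (l + b) • e2 + (b) • e3) :
    IsRotaBaxter l P := by
  have hP : ∀ v : Hss, P v =
      ⟨-l * v.re + l * v.imI, 0,
        a * v.imI - (l + b) * v.imJ + (l + b) * v.imK,
        (a * b / (l + b)) * v.imI - b * v.imJ + b * v.imK⟩ := by
    intro v
    conv_lhs => rw [rep v]
    simp only [map_add, map_smul, h0, h1, h2, h3]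
    ext <;> simp [e1, e2, e3] <;> ring
  intro x y
  obtain ⟨w, x1, x2, x3⟩ := x
  obtain ⟨w', y1, y2, y3⟩ := y
  simp only [hP, mk_mul_mk']
  ext <;> (try simp) <;> (try field_simp) <;> ring_nf
end
end

section
/- Let λ be a nonzero real number. For all real numbers a, b, c with c ≠ 0, the ℝ-linear map P on H_ss determined on the basis by P(1) = −λ, P(e₁) = (λ+a) + a e₁ − ((λ+a)(λ+a+b)/c) e₂ + ((λ+a)(λ+b)/c) e₃, P(e₂) = c + c e₁ − (2λ+a+b) e₂ + (λ+b) e₃, P(e₃) = c + c e₁ − (λ+a+b) e₂ + b e₃ is a Rota-Baxter operator of weight λ on H_ss. (Under the identification e₁ = g, e₂ = ν, e₃ = gν, this is the operator (S6) of Ma et al. on the Sweedler algebra.) -/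
noncomputable section

set_option maxHeartbeats 4000000 in
theorem rb_nonzero_weight_S6 (l : ℝ) (hl : l ≠ 0) (a b c : ℝ) (hc : c ≠ 0)
    (P : Hss →ₗ[ℝ] Hss)
    (h0 : P 1 = (-l) • (1 : Hss))
    (h1 : P e1 = (l + a) • (1 : Hss) + (a) • e1 - ((l + a)*(l + a + b)/c) • e2 + ((l + a)*(l + b)/c) • e3)
    (h2 : P e2 = (c) • (1 : Hss) + (c) • e1 - (2*l + a + b) • e2 + (l + b) • e3)
    (h3 : P e3 = (c) • (1 : Hss) + (c) • e1 - (l + a + b) • e2 + (b) • e3) :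
    IsRotaBaxter l P := by
  have hdecomp : ∀ x : Hss, x = x.re • (1 : Hss) + x.imI • e1 + x.imJ • e2 + x.imK • e3 := by
    intro x
    ext <;> simp [e1, e2, e3]
  have hP : ∀ x : Hss,
      P x = ⟨-l * x.re + (l + a) * x.imI + c * x.imJ + c * x.imK,
             a * x.imI + c * x.imJ + c * x.imK,
             -((l + a)*(l + a + b)/c) * x.imI - (2*l + a + b) * x.imJ - (l + a + b) * x.imK,
             ((l + a)*(l + b)/c) * x.imI + (l + b) * x.imJ + b * x.imK⟩ := by
    intro x
    conv_lhs => rw [hdecomp x]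
    simp only [map_add, map_smul, h0, h1, h2, h3]
    ext <;> simp [e1, e2, e3] <;> ring
  intro x y
  rw [hP x, hP y, hP (_ * y), hP (x * _), hP (x * y)]
  ext <;>
    simp only [QuaternionAlgebra.re_mul, QuaternionAlgebra.imI_mul, QuaternionAlgebra.imJ_mul,
      QuaternionAlgebra.imK_mul, QuaternionAlgebra.re_add, QuaternionAlgebra.imI_add,
      QuaternionAlgebra.imJ_add, QuaternionAlgebra.imK_add, QuaternionAlgebra.re_smul,
      QuaternionAlgebra.imI_smul, QuaternionAlgebra.imJ_smul, QuaternionAlgebra.imK_smul,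
      smul_eq_mul] <;>
    field_simp <;> ring
end
end
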